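/- Let A be an m×N nonnegative real matrix whose bipartite adjacency structure (column j adjacent to row i iff A_{ij} ≠ 0) is a (k, ε)-expander, with all nonzero entries of A in [1, 2], minimum column degree d_min and maximum column degree d_max. Then for any index set K' with |K'| ≤ k and any vector w supported arbitrarily, ordering coordinates of K' decreasingly by |w|, one has ‖A_{K'} w_{K'}‖₁ ≥ (d_min − 4·d_max·ε)·‖w_{K'}‖₁. -/

import Mathlib

open Matrix Finset

/-- Number of nonzero entries in column `j` of `A` (the degree of the
corresponding left-hand "edge" node in the bipartite graph of `A`). -/
noncomputable def colDeg {m N : ℕ} (A : Matrix (Fin m) (Fin N) ℝ)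
    (j : Fin N) : ℕ :=
  (univ.filter (fun i => A i j ≠ 0)).card

open Classical in
/-- Rows having a nonzero entry in some column of `S`: the neighbors `N(S)`. -/
noncomputable def nbrs {m N : ℕ} (A : Matrix (Fin m) (Fin N) ℝ)
    (S : Finset (Fin N)) : Finset (Fin m) :=
  univ.filter (fun i => ∃ j ∈ S, A i j ≠ 0)

/-- RIP-1-type lower bound from expansion: if the bipartite structure of the
nonnegative matrix `A` (nonzero entries in `[1,2]`, column degrees between
`d_min` and `d_max`) is a `(k, ε)`-expander, then
`‖A_{K'} w_{K'}‖₁ ≥ (d_min − 4 d_max ε) ‖w_{K'}‖₁` for any `K'` with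
`|K'| ≤ k`. -/


lemma abel_aux (B : ℝ) (hB : 0 ≤ B) :
    ∀ n : ℕ, ∀ c g : ℕ → ℝ,
      (∀ r, r < n → 0 ≤ c r) → (∀ r, r < n → 0 ≤ g r) →
      (∀ r s, r ≤ s → s < n → g s ≤ g r) →
      (∀ t, t ≤ n → ∑ r ∈ range t, c r ≤ B * t) →
      ∑ r ∈ range n, c r * g r ≤ B * ∑ r ∈ range n, g r := by
  intro n
  induction n with
  | zero => intro c g _ _ _ _; simp
  | succ n ih =>
    intro c g hc hg hmono hpre
    set a := g n with ha
    have ha0 : 0 ≤ a := hg n (Nat.lt_succ_self n)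
    have h1 : ∑ r ∈ range n, c r * (g r - a) ≤ B * ∑ r ∈ range n, (g r - a) := by
      apply ih
      · intro r hr; exact hc r (hr.trans (Nat.lt_succ_self n))
      · intro r hr
        have := hmono r n (Nat.le_of_lt hr) (Nat.lt_succ_self n)
        linarith
      · intro r s hrs hs
        have := hmono r s hrs (hs.trans (Nat.lt_succ_self n))
        linarith
      · intro t ht; exact hpre t (ht.trans (Nat.le_succ n))
    have hpre1 := hpre (n+1) le_rfl
    push_cast at hpre1
    have h2 : a * ∑ r ∈ range (n+1), c r ≤ a * (B * (n+1)) :=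
      mul_le_mul_of_nonneg_left hpre1 ha0
    have key : ∑ r ∈ range (n+1), c r * g r
        = ∑ r ∈ range n, c r * (g r - a) + a * ∑ r ∈ range (n+1), c r := by
      have e1 : ∑ r ∈ range n, c r * (g r - a)
          = ∑ r ∈ range n, c r * g r - a * ∑ r ∈ range n, c r := by
        simp_rw [mul_sub]
        rw [Finset.sum_sub_distrib, Finset.mul_sum]
        congr 1
        apply Finset.sum_congr rfl; intro x _; ring
      rw [e1, Finset.sum_range_succ, Finset.sum_range_succ c n]
      ring
    have hsum : ∑ r ∈ range (n+1), g r = ∑ r ∈ range n, g r + a := by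
      rw [Finset.sum_range_succ]
    have hgs : ∑ r ∈ range n, (g r - a) = ∑ r ∈ range n, g r - n * a := by
      rw [Finset.sum_sub_distrib]; simp [mul_comm]
    rw [key, hsum]
    rw [hgs] at h1
    push_cast at h2 ⊢
    nlinarith [h1, h2]

/-- `r` is the first (lowest-index) column in the ordering `f` that row `i` hits. -/
def firstP {m N n : ℕ} (A : Matrix (Fin m) (Fin N) ℝ) (f : Fin n → Fin N)
    (i : Fin m) (r : Fin n) : Prop :=
  A i (f r) ≠ 0 ∧ ∀ r' : Fin n, r' < r → A i (f r') = 0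

/-- `(i, r)` is a collision edge. -/
def collP {m N n : ℕ} (A : Matrix (Fin m) (Fin N) ℝ) (f : Fin n → Fin N)
    (i : Fin m) (r : Fin n) : Prop :=
  A i (f r) ≠ 0 ∧ ∃ r' : Fin n, r' < r ∧ A i (f r') ≠ 0

open scoped Classical in
noncomputable def fnumF {m N n : ℕ} (A : Matrix (Fin m) (Fin N) ℝ)
    (f : Fin n → Fin N) (r : Fin n) : ℕ :=
  (univ.filter (fun i => firstP A f i r)).card

open scoped Classical in
noncomputable def cnumF {m N n : ℕ} (A : Matrix (Fin m) (Fin N) ℝ)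
    (f : Fin n → Fin N) (r : Fin n) : ℕ :=
  (univ.filter (fun i => collP A f i r)).card

lemma first_unique {m N n : ℕ} {A : Matrix (Fin m) (Fin N) ℝ} {f : Fin n → Fin N}
    {i : Fin m} {r r' : Fin n} (h : firstP A f i r) (h' : firstP A f i r') : r = r' := by
  rcases lt_trichotomy r r' with hlt | heq | hgt
  · exact absurd (h'.2 r hlt) h.1
  · exact heq
  · exact absurd (h.2 r' hgt) h'.1

lemma exists_first {m N n : ℕ} {A : Matrix (Fin m) (Fin N) ℝ} {f : Fin n → Fin N}
    {i : Fin m} {r : Fin n} (h : A i (f r) ≠ 0) :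
    ∃ r₀ : Fin n, firstP A f i r₀ ∧ r₀ ≤ r := by
  classical
  set T : Finset (Fin n) := univ.filter (fun s => A i (f s) ≠ 0) with hT
  have hrT : r ∈ T := by simp [hT, h]
  have hne : T.Nonempty := ⟨r, hrT⟩
  refine ⟨T.min' hne, ⟨?_, ?_⟩, T.min'_le r hrT⟩
  · have := T.min'_mem hne
    simpa [hT] using this
  · intro r' hr'
    by_contra hne'
    have : r' ∈ T := by simp [hT, hne']
    exact absurd (T.min'_le r' this) (not_le.2 hr')

lemma fnum_add_cnum {m N n : ℕ} (A : Matrix (Fin m) (Fin N) ℝ)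
    (f : Fin n → Fin N) (r : Fin n) :
    fnumF A f r + cnumF A f r = colDeg A (f r) := by
  classical
  have key := Finset.card_filter_add_card_filter_not
    (s := univ.filter (fun i : Fin m => A i (f r) ≠ 0))
    (p := fun i => ∀ r' : Fin n, r' < r → A i (f r') = 0)
  rw [Finset.filter_filter, Finset.filter_filter] at key
  have e1 : (univ.filter fun i : Fin m => A i (f r) ≠ 0 ∧ ∀ r' : Fin n, r' < r → A i (f r') = 0)
      = univ.filter (fun i => firstP A f i r) := by
    apply Finset.filter_congr; intro i _; rfl
  have e2 : (univ.filter fun i : Fin m => A i (f r) ≠ 0 ∧ ¬ ∀ r' : Fin n, r' < r → A i (f r') = 0)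
      = univ.filter (fun i => collP A f i r) := by
    apply Finset.filter_congr; intro i _
    simp only [collP]
    constructor
    · rintro ⟨h1, h2⟩; push_neg at h2
      exact ⟨h1, h2.choose, h2.choose_spec.1, h2.choose_spec.2⟩
    · rintro ⟨h1, r', hlt, hne⟩
      exact ⟨h1, fun hall => hne (hall r' hlt)⟩
  rw [e1, e2] at key
  simp only [fnumF, cnumF, colDeg]
  convert key using 2 <;> exact Finset.filter_congr_decidable _ _ _ |>.symm

open scoped Classical in
lemma row_bound {m N n : ℕ} (A : Matrix (Fin m) (Fin N) ℝ) (f : Fin n → Fin N)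
    (hnonneg : ∀ i j, 0 ≤ A i j)
    (hentries : ∀ i j, A i j ≠ 0 → 1 ≤ A i j ∧ A i j ≤ 2)
    (w : Fin N → ℝ) (i : Fin m) :
    (∑ r, if firstP A f i r then |w (f r)| else 0)
      - 2 * (∑ r, if collP A f i r then |w (f r)| else 0)
      ≤ |∑ r, A i (f r) * w (f r)| := by
  classical
  by_cases hcase : ∀ r : Fin n, A i (f r) = 0
  · have h1 : ∀ r : Fin n, ¬ firstP A f i r := fun r hr => hr.1 (hcase r)
    have h2 : ∀ r : Fin n, ¬ collP A f i r := fun r hr => hr.1 (hcase r)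
    simp [h1, h2, hcase]
  · push_neg at hcase; obtain ⟨r1, hr1⟩ := hcase
    obtain ⟨r₀, hfirst, -⟩ := exists_first hr1
    have hFsum : (∑ r, if firstP A f i r then |w (f r)| else 0) = |w (f r₀)| := by
      rw [Finset.sum_eq_single_of_mem r₀ (mem_univ _)]
      · rw [if_pos hfirst]
      · intro b _ hb
        rw [if_neg]; exact fun hbf => hb (first_unique hbf hfirst)
    set T : Finset (Fin n) := univ.filter (fun r => A i (f r) ≠ 0) with hT
    have hr₀T : r₀ ∈ T := by simp [hT, hfirst.1]
    have hCset : univ.filter (fun r => collP A f i r) = T.erase r₀ := by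
      ext r
      rw [Finset.mem_filter]
      simp only [mem_filter, mem_univ, true_and, Finset.mem_erase, hT, collP]
      constructor
      · rintro ⟨h1, r', hlt, hne⟩
        refine ⟨fun hrr => ?_, h1⟩
        subst hrr; exact hne (hfirst.2 r' hlt)
      · rintro ⟨hne, h1⟩
        refine ⟨h1, r₀, ?_, hfirst.1⟩
        rcases lt_trichotomy r₀ r with h | h | h
        · exact h
        · exact absurd h.symm hne
        · exact absurd (hfirst.2 r h) h1
    have hCsum : (∑ r, if collP A f i r then |w (f r)| else 0)
        = ∑ r ∈ T.erase r₀, |w (f r)| := by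
      rw [← Finset.sum_filter, hCset]
    have hTsum : ∑ r, A i (f r) * w (f r) = ∑ r ∈ T, A i (f r) * w (f r) := by
      rw [hT]
      refine (Finset.sum_filter_of_ne ?_).symm
      intro r _ hne' h0
      exact hne' (by rw [h0, zero_mul])
    have hsplit : ∑ r ∈ T, A i (f r) * w (f r)
        = A i (f r₀) * w (f r₀) + ∑ r ∈ T.erase r₀, A i (f r) * w (f r) :=
      (Finset.add_sum_erase T _ hr₀T).symm
    have habs1 : |w (f r₀)| ≤ |A i (f r₀) * w (f r₀)| := by
      rw [abs_mul, abs_of_nonneg (hnonneg i (f r₀))]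
      nlinarith [(hentries i (f r₀) hfirst.1).1, abs_nonneg (w (f r₀))]
    have habs2 : |∑ r ∈ T.erase r₀, A i (f r) * w (f r)|
        ≤ 2 * ∑ r ∈ T.erase r₀, |w (f r)| := by
      calc |∑ r ∈ T.erase r₀, A i (f r) * w (f r)|
          ≤ ∑ r ∈ T.erase r₀, |A i (f r) * w (f r)| :=
            Finset.abs_sum_le_sum_abs _ _
        _ ≤ ∑ r ∈ T.erase r₀, 2 * |w (f r)| := by
            refine Finset.sum_le_sum fun r hr => ?_
            have hrT : r ∈ T := Finset.mem_of_mem_erase hr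
            have hA : A i (f r) ≠ 0 := by
              simpa [hT] using hrT
            rw [abs_mul, abs_of_nonneg (hnonneg i (f r))]
            exact mul_le_mul_of_nonneg_right (hentries _ _ hA).2 (abs_nonneg _)
        _ = 2 * ∑ r ∈ T.erase r₀, |w (f r)| := by rw [Finset.mul_sum]
    rw [hFsum, hCsum, hTsum, hsplit]
    have key : |A i (f r₀) * w (f r₀)| - |∑ r ∈ T.erase r₀, A i (f r) * w (f r)|
        ≤ |A i (f r₀) * w (f r₀) + ∑ r ∈ T.erase r₀, A i (f r) * w (f r)| := by
      have h := abs_add_le (A i (f r₀) * w (f r₀) + ∑ r ∈ T.erase r₀, A i (f r) * w (f r))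
        (-(∑ r ∈ T.erase r₀, A i (f r) * w (f r)))
      simp only [add_neg_cancel_right, abs_neg] at h
      linarith
    linarith

lemma prefix_first_count {m N n : ℕ} (A : Matrix (Fin m) (Fin N) ℝ)
    (f : Fin n → Fin N) (t : ℕ) :
    ∑ r ∈ univ.filter (fun r : Fin n => r.val < t), fnumF A f r
      = (nbrs A ((univ.filter (fun r : Fin n => r.val < t)).image f)).card := by
  classical
  set Pt := univ.filter (fun r : Fin n => r.val < t) with hPt
  have h1 : ∀ r, fnumF A f r = ∑ i, if firstP A f i r then 1 else 0 := by
    intro r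
    rw [fnumF, Finset.card_filter]
  have h2 : ∀ i, (∑ r ∈ Pt, if firstP A f i r then (1:ℕ) else 0)
      = if i ∈ nbrs A (Pt.image f) then 1 else 0 := by
    intro i
    by_cases hi : i ∈ nbrs A (Pt.image f)
    · rw [if_pos hi]
      simp only [nbrs, mem_filter, mem_univ, true_and] at hi
      obtain ⟨j, hjmem, hAj⟩ := hi
      obtain ⟨r, hrPt, rfl⟩ := Finset.mem_image.1 hjmem
      obtain ⟨r₀, hfirst, hle⟩ := exists_first hAj
      have hr₀Pt : r₀ ∈ Pt := by
        simp only [hPt, mem_filter, mem_univ, true_and] at hrPt ⊢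
        exact lt_of_le_of_lt (show (r₀:ℕ) ≤ r from hle) hrPt
      rw [Finset.sum_eq_single_of_mem r₀ hr₀Pt]
      · rw [if_pos hfirst]
      · intro b _ hb
        rw [if_neg]; exact fun hbf => hb (first_unique hbf hfirst)
    · rw [if_neg hi]
      refine Finset.sum_eq_zero fun r hrPt => ?_
      rw [if_neg]
      intro hf
      apply hi
      simp only [nbrs, mem_filter, mem_univ, true_and]
      exact ⟨f r, Finset.mem_image_of_mem f hrPt, hf.1⟩
  calc ∑ r ∈ Pt, fnumF A f r
      = ∑ r ∈ Pt, ∑ i, if firstP A f i r then 1 else 0 := by simp_rw [h1]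
    _ = ∑ i, ∑ r ∈ Pt, (if firstP A f i r then 1 else 0) := Finset.sum_comm
    _ = ∑ i, if i ∈ nbrs A (Pt.image f) then 1 else 0 := by simp_rw [h2]
    _ = (nbrs A (Pt.image f)).card := by
        rw [← Finset.card_filter, Finset.filter_univ_mem]

lemma sum_dite_range {n t : ℕ} (ht : t ≤ n) (F : Fin n → ℝ) :
    ∑ x ∈ range t, (if h : x < n then F ⟨x, h⟩ else 0)
      = ∑ r ∈ univ.filter (fun r : Fin n => r.val < t), F r := by
  classical
  refine Finset.sum_bij'
    (fun x hx => (⟨x, lt_of_lt_of_le (Finset.mem_range.1 hx) ht⟩ : Fin n))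
    (fun r _ => (r : ℕ)) ?_ ?_ ?_ ?_ ?_
  · intro a ha
    simp [Finset.mem_range.1 ha]
  · intro r hr
    simp only [mem_filter, mem_univ, true_and] at hr
    exact Finset.mem_range.2 hr
  · intro a ha; rfl
  · intro r hr; rfl
  · intro a ha
    rw [dif_pos (lt_of_lt_of_le (Finset.mem_range.1 ha) ht)]

theorem stmt16 {m N k : ℕ} (A : Matrix (Fin m) (Fin N) ℝ)
    (hnonneg : ∀ i j, 0 ≤ A i j)
    (hentries : ∀ i j, A i j ≠ 0 → 1 ≤ A i j ∧ A i j ≤ 2)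
    (dmin dmax : ℕ) (hd : ∀ j, dmin ≤ colDeg A j ∧ colDeg A j ≤ dmax)
    (ε : ℝ) (hε0 : 0 < ε) (hε1 : ε < 1)
    (hexp : ∀ S : Finset (Fin N), S.card ≤ k →
      (1 - ε) * ∑ j ∈ S, (colDeg A j : ℝ) ≤ (nbrs A S).card)
    (K' : Finset (Fin N)) (hK' : K'.card ≤ k) (w : Fin N → ℝ) :
    ((dmin : ℝ) - 4 * dmax * ε) * ∑ j ∈ K', |w j| ≤
      ∑ i, |∑ j ∈ K', A i j * w j| := by
  classical
  -- the sorting relation: decreasing |w|, ties broken by index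
  set rel : Fin N → Fin N → Prop :=
    fun a b => |w b| < |w a| ∨ (|w a| = |w b| ∧ a ≤ b) with hreldef
  haveI hdec : DecidableRel rel := Classical.decRel _
  haveI : IsTrans (Fin N) rel := by
    constructor
    intro a b c hab hbc
    rcases hab with h | ⟨h1, h2⟩ <;> rcases hbc with h' | ⟨h1', h2'⟩
    · exact Or.inl (h'.trans h)
    · exact Or.inl (h1' ▸ h)
    · exact Or.inl (by rw [h1]; exact h')
    · exact Or.inr ⟨h1.trans h1', h2.trans h2'⟩
  haveI : IsAntisymm (Fin N) rel := by
    constructor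
    intro a b hab hba
    rcases hab with h | ⟨h1, h2⟩ <;> rcases hba with h' | ⟨h1', h2'⟩
    · exact absurd h' (lt_asymm h)
    · exfalso; rw [h1'] at h; exact lt_irrefl _ h
    · exfalso; rw [h1] at h'; exact lt_irrefl _ h'
    · exact le_antisymm h2 h2'
  haveI : IsTotal (Fin N) rel := by
    constructor
    intro a b
    rcases lt_trichotomy (|w a|) (|w b|) with h | h | h
    · exact Or.inr (Or.inl h)
    · rcases le_total a b with hab | hba
      · exact Or.inl (Or.inr ⟨h, hab⟩)
      · exact Or.inr (Or.inr ⟨h.symm, hba⟩)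
    · exact Or.inl (Or.inl h)
  have hkey : ∀ a b, rel a b → |w b| ≤ |w a| := by
    intro a b hab
    rcases hab with h | ⟨h1, -⟩
    · exact le_of_lt h
    · exact le_of_eq h1.symm
  set l := K'.sort rel with hl
  have hlen : l.length = K'.card := Finset.length_sort rel
  set n := K'.card with hn
  set f : Fin n → Fin N := fun r => l.get (Fin.cast hlen.symm r) with hf
  have hinj : Function.Injective f := by
    intro r s h
    have hnd := Finset.sort_nodup K' rel
    have h2 := (List.Nodup.get_inj_iff hnd).1 h
    simpa [Fin.ext_iff] using h2
  have hmemf : ∀ r, f r ∈ K' := by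
    intro r
    have : f r ∈ l := List.get_mem _ _
    exact (Finset.mem_sort rel).1 this
  have himg : Finset.univ.image f = K' := by
    apply Finset.eq_of_subset_of_card_le
    · intro j hj
      obtain ⟨r, -, rfl⟩ := Finset.mem_image.1 hj
      exact hmemf r
    · rw [Finset.card_image_of_injective _ hinj, Finset.card_univ, Fintype.card_fin]
  have hreindex : ∀ F : Fin N → ℝ, ∑ j ∈ K', F j = ∑ r : Fin n, F (f r) := by
    intro F
    rw [← himg, Finset.sum_image (fun a _ b _ h => hinj h)]
  have hmono : ∀ r s : Fin n, r ≤ s → |w (f s)| ≤ |w (f r)| := by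
    intro r s hrs
    rcases eq_or_lt_of_le hrs with h | h
    · exact le_of_eq (by rw [h])
    · have hs := Finset.pairwise_sort K' rel
      have := hs.rel_get_of_lt (a := Fin.cast hlen.symm r) (b := Fin.cast hlen.symm s) h
      exact hkey _ _ this
  have hnk : n ≤ k := hK'
  -- prefix collision bound
  have hprefix : ∀ t, t ≤ n →
      ∑ r ∈ univ.filter (fun r : Fin n => r.val < t), (cnumF A f r : ℝ) ≤ ε * dmax * t := by
    intro t ht
    set Pt := univ.filter (fun r : Fin n => r.val < t) with hPtd
    have hPtcard : Pt.card = t := by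
      have hsub : ∀ x ∈ Finset.range t, x < n :=
        fun x hx => lt_of_lt_of_le (Finset.mem_range.1 hx) ht
      have hPeq : Pt = (Finset.range t).attachFin hsub := by
        ext r; simp [hPtd, Finset.mem_attachFin]
      rw [hPeq, Finset.card_attachFin, Finset.card_range]
    set St := Pt.image f with hStd
    have hStcard : St.card = t := by
      rw [hStd, Finset.card_image_of_injective _ hinj, hPtcard]
    have hdegsum : ∑ r ∈ Pt, (colDeg A (f r) : ℝ) = ∑ j ∈ St, (colDeg A j : ℝ) := by
      rw [hStd, Finset.sum_image (fun a _ b _ h => hinj h)]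
    have hfsum : ∑ r ∈ Pt, (fnumF A f r : ℝ) = ((nbrs A St).card : ℝ) := by
      exact_mod_cast congrArg (Nat.cast : ℕ → ℝ) (prefix_first_count A f t)
    have hexpSt := hexp St (by rw [hStcard]; exact ht.trans hnk)
    have hsum_eq : ∑ r ∈ Pt, (fnumF A f r : ℝ) + ∑ r ∈ Pt, (cnumF A f r : ℝ)
        = ∑ j ∈ St, (colDeg A j : ℝ) := by
      rw [← hdegsum, ← Finset.sum_add_distrib]
      refine Finset.sum_congr rfl fun r _ => ?_
      exact_mod_cast congrArg (Nat.cast : ℕ → ℝ) (fnum_add_cnum A f r)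
    have hdegub : ∑ j ∈ St, (colDeg A j : ℝ) ≤ (dmax : ℝ) * t := by
      calc ∑ j ∈ St, (colDeg A j : ℝ) ≤ ∑ _j ∈ St, (dmax : ℝ) :=
            Finset.sum_le_sum (fun j _ => by exact_mod_cast (hd j).2)
        _ = (dmax : ℝ) * t := by rw [Finset.sum_const, hStcard, nsmul_eq_mul]; ring
    have hdeg0 : 0 ≤ ∑ j ∈ St, (colDeg A j : ℝ) :=
      Finset.sum_nonneg fun j _ => Nat.cast_nonneg _
    nlinarith [hexpSt, hsum_eq, hfsum, hdegub, hdeg0, hε0.le]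
  -- Abel summation
  set c' : ℕ → ℝ := fun x => if h : x < n then (cnumF A f ⟨x, h⟩ : ℝ) else 0 with hc'
  set g' : ℕ → ℝ := fun x => if h : x < n then |w (f ⟨x, h⟩)| else 0 with hg'
  have habel : ∑ x ∈ range n, c' x * g' x ≤ ε * dmax * ∑ x ∈ range n, g' x := by
    apply abel_aux (ε * dmax) (by positivity) n c' g'
    · intro r hr; rw [hc']; simp only [dif_pos hr]; positivity
    · intro r hr; rw [hg']; simp only [dif_pos hr]; positivity
    · intro r s hrs hsn
      have hrn : r < n := lt_of_le_of_lt hrs hsn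
      rw [hg']; simp only [dif_pos hrn, dif_pos hsn]
      exact hmono ⟨r, hrn⟩ ⟨s, hsn⟩ hrs
    · intro t ht
      rw [hc', sum_dite_range ht (fun r => (cnumF A f r : ℝ))]
      exact hprefix t ht
  have hcg : ∑ r : Fin n, (cnumF A f r : ℝ) * |w (f r)| = ∑ x ∈ range n, c' x * g' x := by
    rw [← Fin.sum_univ_eq_sum_range (fun x => c' x * g' x) n]
    refine Finset.sum_congr rfl fun r _ => ?_
    rw [hc', hg']
    simp only [dif_pos r.isLt, Fin.eta]
  have hgg : ∑ r : Fin n, |w (f r)| = ∑ x ∈ range n, g' x := by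
    rw [← Fin.sum_univ_eq_sum_range (fun x => g' x) n]
    refine Finset.sum_congr rfl fun r _ => ?_
    rw [hg']
    simp only [dif_pos r.isLt, Fin.eta]
  -- sum the row bounds
  have hrows : ∀ i, (∑ r, if firstP A f i r then |w (f r)| else 0)
      - 2 * (∑ r, if collP A f i r then |w (f r)| else 0) ≤ |∑ j ∈ K', A i j * w j| := by
    intro i
    rw [hreindex (fun j => A i j * w j)]
    exact row_bound A f hnonneg hentries w i
  have hstep : ∑ i, ((∑ r, if firstP A f i r then |w (f r)| else 0)
      - 2 * (∑ r, if collP A f i r then |w (f r)| else 0))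
      ≤ ∑ i, |∑ j ∈ K', A i j * w j| :=
    Finset.sum_le_sum fun i _ => hrows i
  have hsum_first : ∑ i, (∑ r, if firstP A f i r then |w (f r)| else 0)
      = ∑ r : Fin n, (fnumF A f r : ℝ) * |w (f r)| := by
    rw [Finset.sum_comm]
    refine Finset.sum_congr rfl fun r _ => ?_
    rw [← Finset.sum_filter, Finset.sum_const, nsmul_eq_mul, fnumF]
  have hsum_coll : ∑ i, (∑ r, if collP A f i r then |w (f r)| else 0)
      = ∑ r : Fin n, (cnumF A f r : ℝ) * |w (f r)| := by
    rw [Finset.sum_comm]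
    refine Finset.sum_congr rfl fun r _ => ?_
    rw [← Finset.sum_filter, Finset.sum_const, nsmul_eq_mul, cnumF]
  rw [Finset.sum_sub_distrib, ← Finset.mul_sum, hsum_first, hsum_coll] at hstep
  have hSf : ∑ r : Fin n, (fnumF A f r : ℝ) * |w (f r)|
      = ∑ r : Fin n, (colDeg A (f r) : ℝ) * |w (f r)|
        - ∑ r : Fin n, (cnumF A f r : ℝ) * |w (f r)| := by
    rw [← Finset.sum_sub_distrib]
    refine Finset.sum_congr rfl fun r _ => ?_
    have h := fnum_add_cnum A f r
    have h2 : (fnumF A f r : ℝ) + (cnumF A f r : ℝ) = (colDeg A (f r) : ℝ) := by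
      exact_mod_cast congrArg (Nat.cast : ℕ → ℝ) h
    linear_combination (|w (f r)|) * h2
  have hdegLB : (dmin : ℝ) * ∑ r : Fin n, |w (f r)|
      ≤ ∑ r : Fin n, (colDeg A (f r) : ℝ) * |w (f r)| := by
    rw [Finset.mul_sum]
    refine Finset.sum_le_sum fun r _ => ?_
    exact mul_le_mul_of_nonneg_right (by exact_mod_cast (hd (f r)).1) (abs_nonneg _)
  have hScUB : ∑ r : Fin n, (cnumF A f r : ℝ) * |w (f r)|
      ≤ ε * dmax * ∑ r : Fin n, |w (f r)| := by
    rw [hcg, hgg]; exact habel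
  have hW : ∑ j ∈ K', |w j| = ∑ r : Fin n, |w (f r)| := hreindex _
  have hWnn : 0 ≤ ∑ r : Fin n, |w (f r)| :=
    Finset.sum_nonneg fun r _ => abs_nonneg _
  rw [hW]
  nlinarith [hstep, hSf, hdegLB, hScUB, hWnn, hε0.le,
    mul_nonneg (mul_nonneg (Nat.cast_nonneg (α := ℝ) dmax) hε0.le) hWnn]
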